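/- arXiv:2601.21467 — 4 statements merged into one kernel-verified Lean document; each statement's English description precedes it below -/
import Mathlib

section
/- Suppose f: H₁ × ⋯ × H_L → ℝ satisfies the blockwise Lipschitz condition: there exist β_{ℓ,j} > 0 such that for all x, all j, and all v_j ∈ H_j, ‖∇_ℓ f(x + e_j v_j) − ∇_ℓ f(x)‖ ≤ β_{ℓ,j}‖v_j‖, where e_j v_j denotes the vector with v_j in block j and zeros elsewhere. Then for every ε = (ε_ℓ) ∈ {0,1}^L, setting β = sqrt(Σ_{ℓ,j} ε_j β_{ℓ,j}²), one has for all x and all v = (v_ℓ): ‖∇f(x + (ε_ℓ v_ℓ)_ℓ) − ∇f(x)‖ ≤ β·‖(ε_ℓ v_ℓ)_ℓ‖. -/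
open Filter

/-- Multiple block smoothness from blockwise Lipschitz continuity of the gradient. -/
theorem multi_block_smoothness
    {L : ℕ} {H : Fin L → Type*}
    [∀ ℓ, NormedAddCommGroup (H ℓ)] [∀ ℓ, InnerProductSpace ℝ (H ℓ)] [∀ ℓ, CompleteSpace (H ℓ)]
    (f : PiLp 2 H → ℝ) (G : PiLp 2 H → PiLp 2 H)
    (β : Fin L → Fin L → ℝ)
    (hβ : ∀ ℓ j, 0 < β ℓ j)
    (hf : Continuous G) [CompleteSpace (PiLp 2 H)]
    (hgrad : ∀ x, HasGradientAt f (G x) x)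
    (hLip : ∀ (ℓ j : Fin L) (x : PiLp 2 H) (v : H j),
      ‖G (x + (WithLp.equiv 2 (∀ i, H i)).symm (Function.update 0 j v)) ℓ - G x ℓ‖
        ≤ β ℓ j * ‖v‖) :
    ∀ (ε : Fin L → ℝ), (∀ ℓ, ε ℓ = 0 ∨ ε ℓ = 1) →
      ∀ (x : PiLp 2 H) (v : ∀ ℓ, H ℓ),
        ‖G (x + (WithLp.equiv 2 (∀ i, H i)).symm (fun ℓ => ε ℓ • v ℓ)) - G x‖
          ≤ Real.sqrt (∑ ℓ, ∑ j, ε j * (β ℓ j) ^ 2) *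
            ‖(WithLp.equiv 2 (∀ i, H i)).symm (fun ℓ => ε ℓ • v ℓ)‖ := by
  intro ε hε x v
  set w : PiLp 2 H := (WithLp.equiv 2 (∀ i, H i)).symm (fun ℓ => ε ℓ • v ℓ) with hw
  set e : Fin L → PiLp 2 H :=
    fun j => (WithLp.equiv 2 (∀ i, H i)).symm (Function.update 0 j (ε j • v j)) with he
  have hεsq : ∀ j, ε j * ε j = ε j := by
    intro j; rcases hε j with h | h <;> simp [h]
  have hεnn : ∀ j, 0 ≤ ε j := by
    intro j; rcases hε j with h | h <;> simp [h]
  -- w is the sum of single-block updates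
  have hsum : w = ∑ j, e j := by
    apply (WithLp.equiv 2 (∀ i, H i)).injective
    funext ℓ
    have : (WithLp.equiv 2 (∀ i, H i)) (∑ j, e j) = ∑ j, (WithLp.equiv 2 (∀ i, H i)) (e j) :=
      WithLp.ofLp_sum _ _ _ _
    rw [this]
    simp only [he, Equiv.apply_symm_apply, hw, Finset.sum_apply]
    rw [Finset.sum_eq_single ℓ]
    · simp
    · intro b _ hb; simp [Function.update_apply, hb.symm]
    · simp
  -- telescoping bound on each block of the gradient difference
  have key : ∀ (ℓ : Fin L) (s : Finset (Fin L)) (y : PiLp 2 H),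
      ‖G (y + ∑ j ∈ s, e j) ℓ - G y ℓ‖ ≤ ∑ j ∈ s, ε j * (β ℓ j * ‖v j‖) := by
    intro ℓ s
    induction s using Finset.induction_on with
    | empty => intro y; simp
    | insert _ _ ha ih =>
      rename_i a s
      intro y
      rw [Finset.sum_insert ha, Finset.sum_insert ha]
      have h1 : y + (e a + ∑ j ∈ s, e j) = (y + ∑ j ∈ s, e j) + e a := by abel
      rw [h1]
      calc ‖G ((y + ∑ j ∈ s, e j) + e a) ℓ - G y ℓ‖
          ≤ ‖G ((y + ∑ j ∈ s, e j) + e a) ℓ - G (y + ∑ j ∈ s, e j) ℓ‖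
            + ‖G (y + ∑ j ∈ s, e j) ℓ - G y ℓ‖ := norm_sub_le_norm_sub_add_norm_sub _ _ _
        _ ≤ β ℓ a * ‖ε a • v a‖ + ∑ j ∈ s, ε j * (β ℓ j * ‖v j‖) :=
            add_le_add (hLip ℓ a _ (ε a • v a)) (ih y)
        _ = ε a * (β ℓ a * ‖v a‖) + ∑ j ∈ s, ε j * (β ℓ j * ‖v j‖) := by
            rw [norm_smul, Real.norm_eq_abs, abs_of_nonneg (hεnn a)]; ring
  -- Cauchy–Schwarz on each block
  have hCS : ∀ ℓ : Fin L, ∑ j, ε j * (β ℓ j * ‖v j‖)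
      ≤ Real.sqrt (∑ j, ε j * β ℓ j ^ 2) * ‖w‖ := by
    intro ℓ
    have h1 : ∀ j : Fin L, ε j * (β ℓ j * ‖v j‖) = (ε j * β ℓ j) * (ε j * ‖v j‖) := by
      intro j; rw [show ε j * β ℓ j * (ε j * ‖v j‖) = (ε j * ε j) * (β ℓ j * ‖v j‖) by ring,
        hεsq j]
    calc ∑ j, ε j * (β ℓ j * ‖v j‖) = ∑ j, (ε j * β ℓ j) * (ε j * ‖v j‖) := by
          simp_rw [h1]
      _ ≤ Real.sqrt (∑ j, (ε j * β ℓ j) ^ 2) * Real.sqrt (∑ j, (ε j * ‖v j‖) ^ 2) :=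
          Real.sum_mul_le_sqrt_mul_sqrt _ _ _
      _ = Real.sqrt (∑ j, ε j * β ℓ j ^ 2) * ‖w‖ := by
          congr 1
          · congr 1; apply Finset.sum_congr rfl; intro j _
            rw [mul_pow, sq (ε j), hεsq j]
          · rw [show ‖w‖ = Real.sqrt (‖w‖ ^ 2) by rw [Real.sqrt_sq (norm_nonneg _)]]
            congr 1
            rw [PiLp.norm_sq_eq_of_L2]
            apply Finset.sum_congr rfl; intro j _
            simp only [hw, WithLp.equiv_symm_apply, PiLp.toLp_apply, norm_smul, Real.norm_eq_abs,
              abs_of_nonneg (hεnn j), mul_pow, sq (ε j), hεsq j]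
  -- combine
  have hblock : ∀ ℓ : Fin L, ‖(G (x + w) - G x) ℓ‖ ≤ Real.sqrt (∑ j, ε j * β ℓ j ^ 2) * ‖w‖ := by
    intro ℓ
    have := (key ℓ Finset.univ x).trans (hCS ℓ)
    rw [← hsum] at this
    simpa using this
  have hsq : ‖G (x + w) - G x‖ ^ 2 ≤ (∑ ℓ, ∑ j, ε j * β ℓ j ^ 2) * ‖w‖ ^ 2 := by
    rw [PiLp.norm_sq_eq_of_L2, Finset.sum_mul]
    apply Finset.sum_le_sum
    intro ℓ _
    calc ‖(G (x + w) - G x) ℓ‖ ^ 2 ≤ (Real.sqrt (∑ j, ε j * β ℓ j ^ 2) * ‖w‖) ^ 2 := by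
          apply pow_le_pow_left₀ (norm_nonneg _) (hblock ℓ)
      _ = (∑ j, ε j * β ℓ j ^ 2) * ‖w‖ ^ 2 := by
          rw [mul_pow, Real.sq_sqrt (Finset.sum_nonneg fun j _ => mul_nonneg (hεnn j) (sq_nonneg _))]
  calc ‖G (x + w) - G x‖ = Real.sqrt (‖G (x + w) - G x‖ ^ 2) := by
        rw [Real.sqrt_sq (norm_nonneg _)]
    _ ≤ Real.sqrt ((∑ ℓ, ∑ j, ε j * β ℓ j ^ 2) * ‖w‖ ^ 2) := Real.sqrt_le_sqrt hsq
    _ = Real.sqrt (∑ ℓ, ∑ j, ε j * β ℓ j ^ 2) * ‖w‖ := by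
        rw [Real.sqrt_mul (Finset.sum_nonneg fun ℓ _ => Finset.sum_nonneg fun j _ => mul_nonneg (hεnn j) (sq_nonneg _)), Real.sqrt_sq (norm_nonneg _)]
end

section
/- Let f: ℝⁿ → ℝ be C¹ with L-Lipschitz gradient, m: ℝⁿ → ℝ convex, and A symmetric positive definite with μ·Id ⪯ A. Fix γ ∈ (0, 1/2), a point x, and a step size α with 0 < α ≤ min{1, (1−γ)μ/L}. If x⁺ minimizes y ↦ ⟨∇f(x), y − x⟩ + (1/(2α))⟨y − x, A(y − x)⟩ + m(y), then f(x⁺) + m(x⁺) − (f(x) + m(x)) ≤ γ·(⟨∇f(x), x⁺ − x⟩ + m(x⁺) − m(x)) ≤ 0. In particular the objective f + m does not increase. -/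
open RealInnerProductSpace

theorem descent_lemma {n : ℕ} (f : EuclideanSpace ℝ (Fin n) → ℝ)
    (g : EuclideanSpace ℝ (Fin n) → EuclideanSpace ℝ (Fin n)) (L : ℝ)
    (hgrad : ∀ z, HasGradientAt f (g z) z) (hL : 0 ≤ L)
    (hLip : ∀ z w, ‖g z - g w‖ ≤ L * ‖z - w‖)
    (a b : EuclideanSpace ℝ (Fin n)) :
    f b ≤ f a + ⟪g a, b - a⟫ + L / 2 * ‖b - a‖ ^ 2 := by
  set d := b - a with hd
  have hgcont : Continuous g := by
    have : LipschitzWith L.toNNReal g := LipschitzWith.of_dist_le_mul (fun z w => by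
      rw [dist_eq_norm, dist_eq_norm, Real.coe_toNNReal L hL]
      exact hLip z w)
    exact this.continuous
  have hline : ∀ t : ℝ, HasDerivAt (fun t : ℝ => f (a + t • d)) ⟪g (a + t • d), d⟫ t := by
    intro t
    have h1 : HasDerivAt (fun t : ℝ => a + t • d) d t := by
      simpa using ((hasDerivAt_id t).smul_const d).const_add a
    have h2 := ((hgrad (a + t • d)).hasFDerivAt).comp_hasDerivAt t h1
    simpa [InnerProductSpace.toDual, Function.comp_def] using h2
  have hcont : Continuous fun t : ℝ => ⟪g (a + t • d), d⟫ :=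
    (hgcont.comp (by continuity)).inner continuous_const
  have hftc : ∫ t in (0:ℝ)..1, ⟪g (a + t • d), d⟫ = f (a + (1:ℝ) • d) - f (a + (0:ℝ) • d) := by
    exact intervalIntegral.integral_eq_sub_of_hasDerivAt (fun t _ => hline t)
      (hcont.intervalIntegrable 0 1)
  have hab : f b - f a = ∫ t in (0:ℝ)..1, ⟪g (a + t • d), d⟫ := by
    rw [hftc]; simp [hd]
  have hbound : ∫ t in (0:ℝ)..1, ⟪g (a + t • d), d⟫
      ≤ ∫ t in (0:ℝ)..1, (⟪g a, d⟫ + t * (L * ‖d‖ ^ 2)) := by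
    apply intervalIntegral.integral_mono_on zero_le_one
      (hcont.intervalIntegrable 0 1)
      (((continuous_const.add ((continuous_id.mul continuous_const))).intervalIntegrable 0 1))
    intro t ht
    simp only [Pi.add_apply, Pi.mul_apply, id_eq]
    have h1 : ⟪g (a + t • d) - g a, d⟫ ≤ ‖g (a + t • d) - g a‖ * ‖d‖ :=
      real_inner_le_norm _ _
    have h2 : ‖g (a + t • d) - g a‖ ≤ L * (t * ‖d‖) := by
      have := hLip (a + t • d) a
      simpa [norm_smul, abs_of_nonneg ht.1] using this
    have h3 : ⟪g (a + t • d), d⟫ = ⟪g a, d⟫ + ⟪g (a + t • d) - g a, d⟫ := by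
      rw [inner_sub_left]; ring
    have h4 : ‖g (a + t • d) - g a‖ * ‖d‖ ≤ L * (t * ‖d‖) * ‖d‖ :=
      mul_le_mul_of_nonneg_right h2 (norm_nonneg d)
    rw [h3]
    have : L * (t * ‖d‖) * ‖d‖ = t * (L * ‖d‖ ^ 2) := by ring
    linarith
  have hint : ∫ t in (0:ℝ)..1, (⟪g a, d⟫ + t * (L * ‖d‖ ^ 2))
      = ⟪g a, d⟫ + L / 2 * ‖d‖ ^ 2 := by
    rw [intervalIntegral.integral_add (intervalIntegrable_const)
      ((intervalIntegral.intervalIntegrable_id).mul_const _)]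
    simp [intervalIntegral.integral_mul_const, integral_id]
    ring
  linarith [hab ▸ (hint ▸ hbound)]

/-- Armijo-type sufficient decrease for a damped proximal Newton step. -/
theorem armijo_sufficient_decrease_prox_newton
    {n : ℕ} (f m : EuclideanSpace ℝ (Fin n) → ℝ)
    (g : EuclideanSpace ℝ (Fin n) → EuclideanSpace ℝ (Fin n))
    (A : EuclideanSpace ℝ (Fin n) →L[ℝ] EuclideanSpace ℝ (Fin n))
    (x xplus : EuclideanSpace ℝ (Fin n)) (L μ γ α : ℝ)
    (hf : ContDiff ℝ 1 f)
    (hgrad : ∀ z, HasGradientAt f (g z) z)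
    (hL : 0 < L)
    (hLip : ∀ z w, ‖g z - g w‖ ≤ L * ‖z - w‖)
    (hm : ConvexOn ℝ Set.univ m)
    (hAsymm : ∀ u v, ⟪A u, v⟫ = ⟪u, A v⟫)
    (hμ : 0 < μ)
    (hA : ∀ u, μ * ‖u‖ ^ 2 ≤ ⟪u, A u⟫)
    (hγ : γ ∈ Set.Ioo (0 : ℝ) (1 / 2))
    (hα : 0 < α) (hαle : α ≤ min 1 ((1 - γ) * μ / L))
    (hmin : ∀ y, ⟪g x, xplus - x⟫ + (1 / (2 * α)) * ⟪xplus - x, A (xplus - x)⟫ + m xplus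
      ≤ ⟪g x, y - x⟫ + (1 / (2 * α)) * ⟪y - x, A (y - x)⟫ + m y) :
    f xplus + m xplus - (f x + m x) ≤ γ * (⟪g x, xplus - x⟫ + m xplus - m x) ∧
    γ * (⟪g x, xplus - x⟫ + m xplus - m x) ≤ 0 := by
  obtain ⟨hγ0, hγ2⟩ := hγ
  set d := xplus - x with hd
  set D : ℝ := ⟪g x, d⟫ + m xplus - m x with hD
  have hx := hmin x
  simp only [sub_self, inner_zero_left, inner_zero_right, map_zero, mul_zero, zero_add] at hx
  have hquad : μ * ‖d‖ ^ 2 ≤ ⟪d, A d⟫ := hA d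
  have hαinv : 0 < 1 / (2 * α) := by positivity
  have hDle : D ≤ -(1 / (2 * α)) * (μ * ‖d‖ ^ 2) := by
    have h1 : (1 / (2 * α)) * (μ * ‖d‖ ^ 2) ≤ (1 / (2 * α)) * ⟪d, A d⟫ :=
      mul_le_mul_of_nonneg_left hquad hαinv.le
    rw [hD]; linarith
  have hD0 : D ≤ 0 := by
    have : 0 ≤ (1 / (2 * α)) * (μ * ‖d‖ ^ 2) := by positivity
    linarith
  have hdesc := descent_lemma f g L hgrad hL.le hLip x xplus
  rw [← hd] at hdesc
  have hαμ : L * α ≤ (1 - γ) * μ := by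
    have := le_trans hαle (min_le_right _ _)
    calc L * α ≤ L * ((1 - γ) * μ / L) := by nlinarith
    _ = (1 - γ) * μ := by field_simp
  constructor
  · -- need f xplus + m xplus - (f x + m x) ≤ γ * D
    have key : D + L / 2 * ‖d‖ ^ 2 ≤ γ * D := by
      have h5 : (1 - γ) * D ≤ (1 - γ) * (-(1 / (2 * α)) * (μ * ‖d‖ ^ 2)) :=
        mul_le_mul_of_nonneg_left hDle (by linarith)
      have h6 : (1 - γ) * (-(1 / (2 * α)) * (μ * ‖d‖ ^ 2)) + L / 2 * ‖d‖ ^ 2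
          = (1 / (2 * α)) * (L * α * ‖d‖ ^ 2 - (1 - γ) * μ * ‖d‖ ^ 2) := by
        have hne : α ≠ 0 := ne_of_gt hα
        field_simp
        ring
      have h7 : (1 / (2 * α)) * (L * α * ‖d‖ ^ 2 - (1 - γ) * μ * ‖d‖ ^ 2) ≤ 0 := by
        apply mul_nonpos_of_nonneg_of_nonpos hαinv.le
        nlinarith [sq_nonneg ‖d‖, mul_le_mul_of_nonneg_right hαμ (sq_nonneg ‖d‖)]
      nlinarith
    rw [hD] at key ⊢
    linarith
  · exact mul_nonpos_of_nonneg_of_nonpos hγ0.le hD0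
end

section
/- Let ψ: H → [0,∞) be proper, convex, and continuous on its domain, and φ: [0,∞) → ℝ be concave, strictly increasing, and differentiable with φ'∘ψ continuous on dom ψ. Then for every y ∈ dom ψ, the limiting (Mordukhovich) subdifferential of φ∘ψ at y equals φ'(ψ(y)) · ∂ψ(y), where ∂ψ is the convex subdifferential of ψ. -/
open Filter Topology RealInnerProductSpace

/-- Fréchet subdifferential of a real-valued function. -/
def frechetSubdiff {E : Type*} [NormedAddCommGroup E] [InnerProductSpace ℝ E]
    (f : E → ℝ) (x : E) : Set E :=
  {s | ∀ ε > (0 : ℝ), ∃ δ > (0 : ℝ), ∀ y,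
    ‖y - x‖ < δ → f x + ⟪s, y - x⟫ - ε * ‖y - x‖ ≤ f y}

/-- Limiting (Mordukhovich) subdifferential of a real-valued function. -/
def limitingSubdiff {E : Type*} [NormedAddCommGroup E] [InnerProductSpace ℝ E]
    (f : E → ℝ) (x : E) : Set E :=
  {s | ∃ (xk sk : ℕ → E),
    Tendsto xk atTop (𝓝 x) ∧
    Tendsto (fun k => f (xk k)) atTop (𝓝 (f x)) ∧
    (∀ k, sk k ∈ frechetSubdiff f (xk k)) ∧
    Tendsto sk atTop (𝓝 s)}

/-- Convex (Fenchel) subdifferential. -/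
def convexSubdiff {E : Type*} [NormedAddCommGroup E] [InnerProductSpace ℝ E]
    (m : E → ℝ) (x : E) : Set E :=
  {v | ∀ y, m x + ⟪v, y - x⟫ ≤ m y}

/-- Tangent line inequality for a concave differentiable function on `[0, ∞)`. -/
lemma concave_tangent_le {φ φ' : ℝ → ℝ} (hφconc : ConcaveOn ℝ (Set.Ici 0) φ)
    (hφdiff : ∀ u ∈ Set.Ici (0 : ℝ), HasDerivAt φ (φ' u) u)
    {a b : ℝ} (ha : 0 ≤ a) (hb : 0 ≤ b) :
    φ b ≤ φ a + φ' a * (b - a) := by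
  have hslope := hasDerivAt_iff_tendsto_slope.1 (hφdiff a ha)
  have hconvneg : ConvexOn ℝ (Set.Ici 0) (fun x => -φ x) := hφconc.neg
  rcases lt_trichotomy b a with h | h | h
  · -- b < a : approach a from the left
    have hba : φ' a ≤ slope φ a b := by
      have ht : Tendsto (slope φ a) (𝓝[<] a) (𝓝 (φ' a)) :=
        hslope.mono_left (nhdsWithin_mono _ (fun t ht => ne_of_lt ht))
      have : ∀ᶠ t in 𝓝[<] a, slope φ a t ≤ slope φ a b := by
        filter_upwards [Ioo_mem_nhdsLT_of_mem (Set.mem_Ioc.2 ⟨h, le_refl a⟩)] with t ht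
        have htb : b ≤ t := ht.1.le
        have ht0 : (0 : ℝ) ≤ t := le_trans hb ht.1.le
        have := hconvneg.secant_mono ha hb ht0 (ne_of_lt h) (ne_of_lt ht.2) htb
        have hb' : slope φ a b = -(((-φ b) - (-φ a)) / (b - a)) := by
          simp [slope_def_field]; ring
        have ht' : slope φ a t = -(((-φ t) - (-φ a)) / (t - a)) := by
          simp [slope_def_field]; ring
        rw [hb', ht']
        linarith
      exact le_of_tendsto ht this
    have hba' : slope φ a b * (b - a) = φ b - φ a := by
      rw [slope_def_field]
      exact div_mul_cancel₀ _ (sub_ne_zero.2 (ne_of_lt h))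
    nlinarith [mul_le_mul_of_nonpos_right hba (by linarith : b - a ≤ 0)]
  · simp [h]
  · -- a < b : approach a from the right
    have hba : slope φ a b ≤ φ' a := by
      have ht : Tendsto (slope φ a) (𝓝[>] a) (𝓝 (φ' a)) :=
        hslope.mono_left (nhdsWithin_mono _ (fun t ht => ne_of_gt ht))
      have : ∀ᶠ t in 𝓝[>] a, slope φ a b ≤ slope φ a t := by
        filter_upwards [Ioo_mem_nhdsGT_of_mem (Set.mem_Ico.2 ⟨le_refl a, h⟩)] with t ht
        have ht0 : (0 : ℝ) ≤ t := le_trans ha ht.1.le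
        have := hconvneg.secant_mono ha ht0 hb (ne_of_gt ht.1) (ne_of_gt h) ht.2.le
        have hb' : slope φ a b = -(((-φ b) - (-φ a)) / (b - a)) := by
          simp [slope_def_field]; ring
        have ht' : slope φ a t = -(((-φ t) - (-φ a)) / (t - a)) := by
          simp [slope_def_field]; ring
        rw [hb', ht']
        linarith
      exact ge_of_tendsto ht this
    have hba' : slope φ a b * (b - a) = φ b - φ a := by
      rw [slope_def_field]
      exact div_mul_cancel₀ _ (sub_ne_zero.2 (ne_of_gt h))
    nlinarith [mul_le_mul_of_nonneg_right hba (by linarith : (0:ℝ) ≤ b - a)]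

/-- The derivative of a strictly increasing concave function on `[0,∞)` is positive. -/
lemma concave_deriv_pos {φ φ' : ℝ → ℝ} (hφconc : ConcaveOn ℝ (Set.Ici 0) φ)
    (hφmono : StrictMonoOn φ (Set.Ici 0))
    (hφdiff : ∀ u ∈ Set.Ici (0 : ℝ), HasDerivAt φ (φ' u) u)
    {u : ℝ} (hu : 0 ≤ u) : 0 < φ' u := by
  have h1 : φ u < φ (u + 1) := hφmono hu (by simp; linarith) (by linarith)
  have h2 : φ (u + 1) ≤ φ u + φ' u * ((u + 1) - u) :=
    concave_tangent_le hφconc hφdiff hu (by linarith)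
  nlinarith

section Main
variable {E : Type*} [NormedAddCommGroup E] [InnerProductSpace ℝ E]

lemma mem_frechet_of_subgrad (ψ : E → ℝ) (φ φ' : ℝ → ℝ)
    (hψ0 : ∀ x, 0 ≤ ψ x)
    (hφconc : ConcaveOn ℝ (Set.Ici 0) φ)
    (hφmono : StrictMonoOn φ (Set.Ici 0))
    (hφdiff : ∀ u ∈ Set.Ici (0 : ℝ), HasDerivAt φ (φ' u) u)
    (x : E) {v : E} (hv : v ∈ convexSubdiff ψ x) :
    φ' (ψ x) • v ∈ frechetSubdiff (fun z => φ (ψ z)) x := by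
  intro ε hε
  set u := ψ x with hu_def
  have hu : 0 ≤ u := hψ0 x
  have hc : 0 < φ' u := concave_deriv_pos hφconc hφmono hφdiff hu
  have hε' : 0 < ε / (‖v‖ + 1) := by positivity
  have hlo := (hasDerivAt_iff_isLittleO.1 (hφdiff u hu)).def hε'
  rw [Metric.eventually_nhds_iff] at hlo
  obtain ⟨δ', hδ'pos, hδ'⟩ := hlo
  refine ⟨δ' / (‖v‖ + 1), by positivity, fun y hy => ?_⟩
  set h := y - x with hh
  set s := ⟪v, h⟫ with hs_def
  have hs_abs : |s| ≤ ‖v‖ * ‖h‖ := abs_real_inner_le_norm v h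
  have hsδ : |s| < δ' := by
    have h1 : ‖v‖ * ‖h‖ ≤ (‖v‖ + 1) * ‖h‖ := by nlinarith [norm_nonneg h]
    have h2 : (‖v‖ + 1) * ‖h‖ < δ' := by
      have := mul_lt_mul_of_pos_left hy (show (0:ℝ) < ‖v‖ + 1 by positivity)
      calc (‖v‖ + 1) * ‖h‖ < (‖v‖ + 1) * (δ' / (‖v‖ + 1)) := this
        _ = δ' := by field_simp
    linarith
  set t := max 0 (u + s) with ht_def
  have ht0 : 0 ≤ t := le_max_left _ _
  have hts : u + s ≤ t := le_max_right _ _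
  have htu : |t - u| ≤ |s| := by
    rw [abs_le]
    constructor
    · have : s ≤ t - u := by linarith
      linarith [neg_abs_le s]
    · have : t ≤ u + |s| := max_le (by linarith [abs_nonneg s]) (by linarith [le_abs_self s])
      linarith
  have hlo' : |φ t - φ u - (t - u) * φ' u| ≤ ε / (‖v‖ + 1) * |t - u| := by
    have := hδ' (show dist t u < δ' by rw [Real.dist_eq]; exact lt_of_le_of_lt htu hsδ)
    simpa [Real.norm_eq_abs, smul_eq_mul] using this
  have key1 : φ u + φ' u * s - ε * ‖h‖ ≤ φ t := by
    have h1 : s ≤ t - u := by linarith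
    have h2 : ε / (‖v‖ + 1) * |t - u| ≤ ε * ‖h‖ := by
      have ha : |t - u| ≤ ‖v‖ * ‖h‖ := htu.trans hs_abs
      rw [div_mul_eq_mul_div, div_le_iff₀ (by positivity)]
      nlinarith [norm_nonneg v, norm_nonneg h, abs_nonneg (t - u)]
    have h3 : φ' u * s ≤ φ' u * (t - u) := mul_le_mul_of_nonneg_left h1 hc.le
    have h4 := (abs_le.1 hlo').1
    nlinarith
  have hψy : t ≤ ψ y := max_le (hψ0 y) (by
    have := hv y
    linarith)
  have key2 : φ t ≤ φ (ψ y) := hφmono.monotoneOn ht0 (hψ0 y) hψy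
  have hinner : ⟪φ' u • v, y - x⟫ = φ' u * s := real_inner_smul_left v h (φ' u)
  simp only [← hh, hinner]
  linarith

lemma subgrad_of_mem_frechet (ψ : E → ℝ) (φ φ' : ℝ → ℝ)
    (hψ0 : ∀ x, 0 ≤ ψ x)
    (hψconv : ConvexOn ℝ Set.univ ψ)
    (hφconc : ConcaveOn ℝ (Set.Ici 0) φ)
    (hφmono : StrictMonoOn φ (Set.Ici 0))
    (hφdiff : ∀ u ∈ Set.Ici (0 : ℝ), HasDerivAt φ (φ' u) u)
    (x : E) {s : E} (hs : s ∈ frechetSubdiff (fun z => φ (ψ z)) x) :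
    (φ' (ψ x))⁻¹ • s ∈ convexSubdiff ψ x := by
  intro z
  set u := ψ x with hu_def
  have hu : 0 ≤ u := hψ0 x
  have hc : 0 < φ' u := concave_deriv_pos hφconc hφmono hφdiff hu
  have key : ⟪s, z - x⟫ ≤ φ' u * (ψ z - u) := by
    by_cases hzx : z = x
    · simp [hzx]; rw [hu_def, sub_self, mul_zero]
    · have hnorm : 0 < ‖z - x‖ := by
        rw [norm_pos_iff, sub_ne_zero]; exact hzx
      refine le_of_forall_pos_le_add fun ε hε => ?_
      obtain ⟨δ, hδ, hF⟩ := hs (ε / ‖z - x‖) (by positivity)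
      set t := min 1 (δ / (2 * ‖z - x‖)) with ht_def
      have ht0 : 0 < t := lt_min one_pos (by positivity)
      have ht1 : t ≤ 1 := min_le_left _ _
      have htδ : t * ‖z - x‖ < δ := by
        have : t ≤ δ / (2 * ‖z - x‖) := min_le_right _ _
        have heq : δ / (2 * ‖z - x‖) * ‖z - x‖ = δ / 2 := by
          field_simp
        have h1 : t * ‖z - x‖ ≤ δ / 2 := by
          calc t * ‖z - x‖ ≤ δ / (2 * ‖z - x‖) * ‖z - x‖ :=
                mul_le_mul_of_nonneg_right this hnorm.le
            _ = δ / 2 := heq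
        linarith
      set y := x + t • (z - x) with hy_def
      have hyx : y - x = t • (z - x) := by rw [hy_def]; abel
      have hynorm : ‖y - x‖ = t * ‖z - x‖ := by
        rw [hyx, norm_smul, Real.norm_eq_abs, abs_of_pos ht0]
      have hF' := hF y (by rw [hynorm]; exact htδ)
      have hconv : ψ y ≤ ψ x + t * (ψ z - ψ x) := by
        have hcomb := hψconv.2 (Set.mem_univ x) (Set.mem_univ z)
          (show (0:ℝ) ≤ 1 - t by linarith) ht0.le (by ring)
        have heq : (1 - t) • x + t • z = y := by
          rw [hy_def]; module
        rw [heq] at hcomb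
        have : (1 - t) * ψ x + t * ψ z = ψ x + t * (ψ z - ψ x) := by ring
        simpa [smul_eq_mul, this] using hcomb
      have htan : φ (ψ y) ≤ φ u + φ' u * (ψ y - u) :=
        concave_tangent_le hφconc hφdiff hu (hψ0 y)
      have hinner : ⟪s, y - x⟫ = t * ⟪s, z - x⟫ := by
        rw [hyx, real_inner_smul_right]
      rw [hinner, hynorm] at hF'
      have hεterm : ε / ‖z - x‖ * (t * ‖z - x‖) = t * ε := by
        field_simp
      rw [hεterm] at hF'
      -- hF' : φ u + t * ⟪s, z - x⟫ - t * ε ≤ φ (ψ y)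
      have hstep : φ' u * (ψ y - u) ≤ φ' u * (t * (ψ z - u)) := by
        apply mul_le_mul_of_nonneg_left _ hc.le
        linarith
      have hall : t * ⟪s, z - x⟫ - t * ε ≤ φ' u * (t * (ψ z - u)) := by
        have := hF'.trans htan
        linarith
      have := (mul_le_mul_iff_right₀ ht0).1 (by linarith [hall] : t * (⟪s, z - x⟫ - ε) ≤ t * (φ' u * (ψ z - u)))
      linarith
  have hinner : ⟪(φ' u)⁻¹ • s, z - x⟫ = (φ' u)⁻¹ * ⟪s, z - x⟫ :=
    real_inner_smul_left s (z - x) (φ' u)⁻¹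
  rw [hinner]
  have h1 : (φ' u)⁻¹ * ⟪s, z - x⟫ ≤ (φ' u)⁻¹ * (φ' u * (ψ z - u)) :=
    mul_le_mul_of_nonneg_left key (inv_nonneg.2 hc.le)
  have h2 : (φ' u)⁻¹ * (φ' u * (ψ z - u)) = ψ z - u := by
    rw [← mul_assoc, inv_mul_cancel₀ hc.ne', one_mul]
  rw [h2] at h1
  linarith

end Main

/-- Chain rule for the limiting subdifferential of a concave ∘ convex
composition (Repetti–Wiaux 2021, Prop. 2.10). -/
theorem limitingSubdiff_concave_comp_convex
    {E : Type*} [NormedAddCommGroup E] [InnerProductSpace ℝ E] [FiniteDimensional ℝ E]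
    (ψ : E → ℝ) (φ φ' : ℝ → ℝ)
    (hψ0 : ∀ x, 0 ≤ ψ x)
    (hψconv : ConvexOn ℝ Set.univ ψ)
    (hψcont : Continuous ψ)
    (hφconc : ConcaveOn ℝ (Set.Ici 0) φ)
    (hφmono : StrictMonoOn φ (Set.Ici 0))
    (hφdiff : ∀ u ∈ Set.Ici (0 : ℝ), HasDerivAt φ (φ' u) u)
    (hφ'cont : Continuous fun x => φ' (ψ x)) :
    ∀ y : E, limitingSubdiff (fun x => φ (ψ x)) y = (fun v => φ' (ψ y) • v) '' convexSubdiff ψ y := by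
  intro y
  have hcy : 0 < φ' (ψ y) := concave_deriv_pos hφconc hφmono hφdiff (hψ0 y)
  ext s
  simp only [limitingSubdiff, Set.mem_setOf_eq, Set.mem_image]
  constructor
  · rintro ⟨xk, sk, hxk, _, hskF, hsk⟩
    have hck : Tendsto (fun k => φ' (ψ (xk k))) atTop (𝓝 (φ' (ψ y))) :=
      (hφ'cont.tendsto y).comp hxk
    have hvkmem : ∀ k, (φ' (ψ (xk k)))⁻¹ • sk k ∈ convexSubdiff ψ (xk k) := fun k =>
      subgrad_of_mem_frechet ψ φ φ' hψ0 hψconv hφconc hφmono hφdiff (xk k) (hskF k)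
    have hvk : Tendsto (fun k => (φ' (ψ (xk k)))⁻¹ • sk k) atTop (𝓝 ((φ' (ψ y))⁻¹ • s)) :=
      (hck.inv₀ hcy.ne').smul hsk
    refine ⟨(φ' (ψ y))⁻¹ • s, ?_, smul_inv_smul₀ hcy.ne' s⟩
    intro z
    have hle : ∀ k, ψ (xk k) + ⟪(φ' (ψ (xk k)))⁻¹ • sk k, z - xk k⟫ ≤ ψ z := fun k =>
      hvkmem k z
    exact le_of_tendsto (((hψcont.tendsto y).comp hxk).add
      (hvk.inner (tendsto_const_nhds.sub hxk))) (Eventually.of_forall hle)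
  · rintro ⟨v, hv, rfl⟩
    exact ⟨fun _ => y, fun _ => φ' (ψ y) • v, tendsto_const_nhds, tendsto_const_nhds,
      fun _ => mem_frechet_of_subgrad ψ φ φ' hψ0 hφconc hφmono hφdiff y hv,
      tendsto_const_nhds⟩
end

section
/- Let (C_k), (D_k), (Δ_k) be nonnegative real sequences, and a, b > 0 constants with: C_k ≤ a·D_{k−1}·Δ_k for all k > k₀, and D_k ≤ sqrt(b·C_k). Then 2·D_k ≤ a·b·Δ_k + D_{k−1} for all k > k₀; consequently, for all K > k₀, Σ_{k=k₀+1}^{K} D_k ≤ D_{k₀} + a·b·Σ_{k=k₀+1}^{K} Δ_k. In particular if Σ Δ_k < ∞ then Σ D_k < ∞. -/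
/-- The KŁ summability argument: from `C_k ≤ a D_{k−1} Δ_k` and `D_k ≤ √(b C_k)`
one gets `2 D_k ≤ a b Δ_k + D_{k−1}`, hence summability of `(D_k)`. -/
theorem KL_summability_argument
    (C D Δ : ℕ → ℝ) (a b : ℝ) (k₀ : ℕ)
    (ha : 0 < a) (hb : 0 < b)
    (hC0 : ∀ k, 0 ≤ C k) (hD0 : ∀ k, 0 ≤ D k) (hΔ0 : ∀ k, 0 ≤ Δ k)
    (hC : ∀ k, k₀ < k → C k ≤ a * D (k - 1) * Δ k)
    (hD : ∀ k, k₀ < k → D k ≤ Real.sqrt (b * C k)) :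
    (∀ k, k₀ < k → 2 * D k ≤ a * b * Δ k + D (k - 1)) ∧
    (∀ K, k₀ < K →
      ∑ k ∈ Finset.Ioc k₀ K, D k ≤ D k₀ + a * b * ∑ k ∈ Finset.Ioc k₀ K, Δ k) ∧
    (Summable Δ → Summable D) := by
  have key : ∀ k, k₀ < k → 2 * D k ≤ a * b * Δ k + D (k - 1) := by
    intro k hk
    have h1 : D k ≤ Real.sqrt (b * C k) := hD k hk
    have h2 : b * C k ≤ (a * b * Δ k) * D (k - 1) := by
      have := hC k hk
      nlinarith [hb.le, hΔ0 k, hD0 (k-1)]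
    have hu : 0 ≤ a * b * Δ k := mul_nonneg (by positivity) (hΔ0 k)
    have hv : 0 ≤ D (k - 1) := hD0 _
    have h3 : Real.sqrt (b * C k) ≤ Real.sqrt ((a * b * Δ k) * D (k - 1)) :=
      Real.sqrt_le_sqrt h2
    have h4 : Real.sqrt ((a * b * Δ k) * D (k - 1))
        = Real.sqrt (a * b * Δ k) * Real.sqrt (D (k - 1)) := Real.sqrt_mul hu _
    have h5 : 2 * (Real.sqrt (a * b * Δ k) * Real.sqrt (D (k - 1)))
        ≤ a * b * Δ k + D (k - 1) := by
      nlinarith [Real.sq_sqrt hu, Real.sq_sqrt hv, Real.sqrt_nonneg (a*b*Δ k),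
        Real.sqrt_nonneg (D (k-1)), sq_nonneg (Real.sqrt (a*b*Δ k) - Real.sqrt (D (k-1)))]
    nlinarith [h1, h3, h4.le, h5]
  have strong : ∀ K, k₀ < K →
      (∑ k ∈ Finset.Ioc k₀ K, D k) + D K ≤ D k₀ + a * b * ∑ k ∈ Finset.Ioc k₀ K, Δ k := by
    intro K hK
    induction K with
    | zero => omega
    | succ n ih =>
      rcases Nat.lt_or_ge k₀ n with hn | hn
      · have hsub : k₀ ≤ n := hn.le
        rw [Finset.sum_Ioc_succ_top hsub, Finset.sum_Ioc_succ_top hsub]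
        have hkey := key (n+1) hK
        simp only [Nat.add_sub_cancel] at hkey
        have := ih hn
        nlinarith [hD0 (n+1)]
      · have hkn : k₀ = n := by omega
        subst hkn
        have hkey := key (k₀+1) hK
        simp only [Nat.add_sub_cancel] at hkey
        simp [Finset.sum_Ioc_succ_top (le_refl k₀)]
        linarith
  have part2 : ∀ K, k₀ < K →
      ∑ k ∈ Finset.Ioc k₀ K, D k ≤ D k₀ + a * b * ∑ k ∈ Finset.Ioc k₀ K, Δ k := by
    intro K hK
    have := strong K hK
    nlinarith [hD0 K]
  refine ⟨key, part2, ?_⟩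
  intro hΔ
  set M := (∑ k ∈ Finset.range (k₀+1), D k) + (D k₀ + a * b * ∑' k, Δ k) with hM
  apply summable_of_sum_range_le (c := M) hD0
  intro n
  have hsubset : Finset.range n ⊆ Finset.range (k₀+1) ∪ Finset.Ioc k₀ n := by
    intro k hk
    simp only [Finset.mem_union, Finset.mem_range, Finset.mem_Ioc] at *
    omega
  have hdisj : Disjoint (Finset.range (k₀+1)) (Finset.Ioc k₀ n) := by
    rw [Finset.disjoint_left]
    intro k hk hk'
    simp only [Finset.mem_range, Finset.mem_Ioc] at *
    omega
  have h1 : ∑ k ∈ Finset.range n, D k ≤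
      ∑ k ∈ Finset.range (k₀+1) ∪ Finset.Ioc k₀ n, D k := by
    apply Finset.sum_le_sum_of_subset_of_nonneg hsubset
    intro k _ _; exact hD0 k
  rw [Finset.sum_union hdisj] at h1
  have h2 : ∑ k ∈ Finset.Ioc k₀ n, D k ≤ D k₀ + a * b * ∑' k, Δ k := by
    rcases Nat.lt_or_ge k₀ n with hn | hn
    · refine (part2 n hn).trans ?_
      have : ∑ k ∈ Finset.Ioc k₀ n, Δ k ≤ ∑' k, Δ k :=
        Summable.sum_le_tsum _ (fun k _ => hΔ0 k) hΔ
      have := mul_le_mul_of_nonneg_left this (le_of_lt (by positivity : (0:ℝ) < a*b))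
      linarith
    · have : Finset.Ioc k₀ n = ∅ := by
        apply Finset.Ioc_eq_empty; omega
      rw [this]; simp
      have ht : 0 ≤ ∑' k, Δ k := tsum_nonneg hΔ0
      have := hD0 k₀
      nlinarith [mul_nonneg (mul_nonneg ha.le hb.le) ht]
  linarith
end
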